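/- Suppose Z_i = Γ_{θ*} + ε_i for i = 1,…,n with θ* ∈ ℝ^p and ε₁,…,ε_n symmetric d×d matrices, max_{1 ≤ j ≤ p} ‖B_j‖_F ≤ M₁, and let θ̂ be a minimizer of ℓ^λ. If the deterministic event (1/n) ‖Σ_{i=1}^n ε_i‖₂ ≤ λ / (M₁ u_p n) holds, where u_p = max_{1 ≤ j ≤ p} √(rank(B_j)), then ‖Γ_{θ̂} − Γ_{θ*}‖_F² ≤ 4λ |θ*|₁ / n. -/

import Mathlib

open Matrix MeasureTheory ProbabilityTheory Finset

noncomputable section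

/-- Frobenius inner product `⟨A,B⟩ = tr(Aᵀ B)`. -/
def frobInner {d : ℕ} (A B : Matrix (Fin d) (Fin d) ℝ) : ℝ := Matrix.trace (Aᵀ * B)

/-- Frobenius norm `‖A‖_F = √⟨A,A⟩`. -/
def frobNorm {d : ℕ} (A : Matrix (Fin d) (Fin d) ℝ) : ℝ := Real.sqrt (frobInner A A)

/-- Spectral (operator) norm of a matrix, as the operator norm of the induced
linear map on Euclidean space. -/
def specNorm {d : ℕ} (A : Matrix (Fin d) (Fin d) ℝ) : ℝ :=
  ‖LinearMap.toContinuousLinearMap (Matrix.toEuclideanLin A)‖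

/-- Loewner order: `A ⪯ B` iff `B - A` is positive semidefinite. -/
def loewnerLE {d : ℕ} (A B : Matrix (Fin d) (Fin d) ℝ) : Prop := (B - A).PosSemidef

/-- Entrywise expectation of a random matrix. -/
def matExp {Ω : Type*} [MeasurableSpace Ω] (μ : Measure Ω) {d : ℕ}
    (X : Ω → Matrix (Fin d) (Fin d) ℝ) : Matrix (Fin d) (Fin d) ℝ :=
  Matrix.of fun a c => ∫ ω, X ω a c ∂μ

/-- Linear predictor `Γ_θ = ∑ⱼ θⱼ Bⱼ`. -/
def Gamma {d p : ℕ} (B : Fin p → Matrix (Fin d) (Fin d) ℝ) (θ : Fin p → ℝ) :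
    Matrix (Fin d) (Fin d) ℝ := ∑ j, θ j • B j

/-- Empirical risk `ℓ(θ) = ∑ᵢ ‖Zᵢ - Γ_θ‖_F²`. -/
def empRisk {d p n : ℕ} (B : Fin p → Matrix (Fin d) (Fin d) ℝ)
    (Z : Fin n → Matrix (Fin d) (Fin d) ℝ) (θ : Fin p → ℝ) : ℝ :=
  ∑ i, (frobNorm (Z i - Gamma B θ)) ^ 2

/-- Penalized objective `ℓ^λ(θ) = ℓ(θ) + 2λ ∑ⱼ |θⱼ|`. -/
def objective {d p n : ℕ} (B : Fin p → Matrix (Fin d) (Fin d) ℝ)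
    (Z : Fin n → Matrix (Fin d) (Fin d) ℝ) (lam : ℝ) (θ : Fin p → ℝ) : ℝ :=
  empRisk B Z θ + 2 * lam * ∑ j, |θ j|

/-- Soft-thresholding operator `ST`. -/
def softThresh (a lam : ℝ) : ℝ := if lam < a then a - lam else if a < -lam then a + lam else 0

/-- Measurable space structure on matrices (entrywise, via the Pi structure). -/
instance matrixMeasurableSpace {d : ℕ} : MeasurableSpace (Matrix (Fin d) (Fin d) ℝ) :=
  (inferInstance : MeasurableSpace (Fin d → Fin d → ℝ))

lemma frobInner_eq_sum {d : ℕ} (A B : Matrix (Fin d) (Fin d) ℝ) :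
    frobInner A B = ∑ i, ∑ j, A i j * B i j := by
  rw [frobInner, Matrix.trace]
  simp only [Matrix.diag, Matrix.mul_apply, Matrix.transpose_apply]
  rw [Finset.sum_comm]

lemma frobInner_self_nonneg {d : ℕ} (A : Matrix (Fin d) (Fin d) ℝ) : 0 ≤ frobInner A A := by
  rw [frobInner_eq_sum]
  apply Finset.sum_nonneg; intro i _
  apply Finset.sum_nonneg; intro j _
  exact mul_self_nonneg _

lemma frobNorm_sq {d : ℕ} (A : Matrix (Fin d) (Fin d) ℝ) :
    frobNorm A ^ 2 = frobInner A A := Real.sq_sqrt (frobInner_self_nonneg A)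

lemma frobNorm_nonneg {d : ℕ} (A : Matrix (Fin d) (Fin d) ℝ) : 0 ≤ frobNorm A :=
  Real.sqrt_nonneg _

lemma frobNorm_sub_sq {d : ℕ} (X Y : Matrix (Fin d) (Fin d) ℝ) :
    frobNorm (X - Y) ^ 2 = frobNorm X ^ 2 - 2 * frobInner X Y + frobNorm Y ^ 2 := by
  simp only [frobNorm_sq, frobInner_eq_sum, Matrix.sub_apply]
  have key : ∀ a, ∑ b, (X a b - Y a b) * (X a b - Y a b)
      = (∑ b, X a b * X a b) - (∑ b, 2 * (X a b * Y a b)) + ∑ b, Y a b * Y a b := by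
    intro a
    rw [← Finset.sum_sub_distrib, ← Finset.sum_add_distrib]
    exact Finset.sum_congr rfl fun b _ => by ring
  calc ∑ a, ∑ b, (X a b - Y a b) * (X a b - Y a b)
      = ∑ a, ((∑ b, X a b * X a b) - (∑ b, 2 * (X a b * Y a b)) + ∑ b, Y a b * Y a b) :=
        Finset.sum_congr rfl fun a _ => key a
    _ = (∑ a, ∑ b, X a b * X a b) - (∑ a, ∑ b, 2 * (X a b * Y a b))
        + ∑ a, ∑ b, Y a b * Y a b := by
        rw [Finset.sum_add_distrib, Finset.sum_sub_distrib]
    _ = (∑ a, ∑ b, X a b * X a b) - 2 * (∑ a, ∑ b, X a b * Y a b)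
        + ∑ a, ∑ b, Y a b * Y a b := by
        congr 1
        congr 1
        rw [Finset.mul_sum]
        exact Finset.sum_congr rfl fun a _ => (Finset.mul_sum _ _ _).symm

lemma frobInner_sum_left {d n : ℕ} (ε : Fin n → Matrix (Fin d) (Fin d) ℝ)
    (C : Matrix (Fin d) (Fin d) ℝ) :
    frobInner (∑ i, ε i) C = ∑ i, frobInner (ε i) C := by
  simp only [frobInner_eq_sum]
  calc ∑ a, ∑ b, (∑ i, ε i) a b * C a b
      = ∑ a, ∑ b, ∑ i, ε i a b * C a b := by
        refine Finset.sum_congr rfl fun a _ => Finset.sum_congr rfl fun b _ => ?_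
        rw [Matrix.sum_apply, Finset.sum_mul]
    _ = ∑ a, ∑ i, ∑ b, ε i a b * C a b := Finset.sum_congr rfl fun a _ => Finset.sum_comm
    _ = ∑ i, ∑ a, ∑ b, ε i a b * C a b := Finset.sum_comm

lemma frobInner_sum_smul {d p : ℕ} (E : Matrix (Fin d) (Fin d) ℝ) (c : Fin p → ℝ)
    (B : Fin p → Matrix (Fin d) (Fin d) ℝ) :
    frobInner E (∑ j, c j • B j) = ∑ j, c j * frobInner E (B j) := by
  simp only [frobInner_eq_sum]
  calc ∑ a, ∑ b, E a b * (∑ j, c j • B j) a b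
      = ∑ a, ∑ b, ∑ j, c j * (E a b * B j a b) := by
        refine Finset.sum_congr rfl fun a _ => Finset.sum_congr rfl fun b _ => ?_
        rw [Matrix.sum_apply, Finset.mul_sum]
        refine Finset.sum_congr rfl fun j _ => ?_
        rw [Matrix.smul_apply, smul_eq_mul]
        ring
    _ = ∑ a, ∑ j, ∑ b, c j * (E a b * B j a b) := Finset.sum_congr rfl fun a _ => Finset.sum_comm
    _ = ∑ j, ∑ a, ∑ b, c j * (E a b * B j a b) := Finset.sum_comm
    _ = ∑ j, c j * ∑ a, ∑ b, E a b * B j a b := by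
        refine Finset.sum_congr rfl fun j _ => ?_
        rw [Finset.mul_sum]
        exact Finset.sum_congr rfl fun a _ => (Finset.mul_sum _ _ _).symm

lemma frobNorm_pos {d : ℕ} {A : Matrix (Fin d) (Fin d) ℝ} (h : A ≠ 0) : 0 < frobNorm A := by
  rw [frobNorm]
  apply Real.sqrt_pos.mpr
  rw [frobInner_eq_sum]
  obtain ⟨i, j, hij⟩ : ∃ i j, A i j ≠ 0 := by
    by_contra hc
    push_neg at hc
    exact h (by ext i j; simp [hc])
  apply Finset.sum_pos'
  · intro a _
    exact Finset.sum_nonneg fun b _ => mul_self_nonneg _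
  · refine ⟨i, Finset.mem_univ i, ?_⟩
    apply Finset.sum_pos'
    · intro b _; exact mul_self_nonneg _
    · exact ⟨j, Finset.mem_univ j, mul_self_pos.mpr hij⟩

lemma specNorm_nonneg {d : ℕ} (A : Matrix (Fin d) (Fin d) ℝ) : 0 ≤ specNorm A := norm_nonneg _

lemma quad_form_le {d : ℕ} (E : Matrix (Fin d) (Fin d) ℝ) (v : Fin d → ℝ) :
    |∑ a, ∑ c, v a * E a c * v c| ≤ specNorm E * ∑ a, (v a) ^ 2 := by
  set x : EuclideanSpace ℝ (Fin d) := (WithLp.equiv 2 (Fin d → ℝ)).symm v with hx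
  have h1 : (∑ a, ∑ c, v a * E a c * v c) = inner ℝ x (Matrix.toEuclideanLin E x) := by
    rw [Matrix.toEuclideanLin_apply]
    simp only [hx]
    rw [PiLp.inner_apply]
    simp only [WithLp.equiv_symm_apply, WithLp.ofLp_toLp, RCLike.inner_apply,
      conj_trivial, Matrix.mulVec, dotProduct]
    rw [Finset.sum_congr rfl]
    intro a _
    rw [Finset.sum_mul]
    exact Finset.sum_congr rfl fun c _ => by ring
  have h2 : ‖x‖ ^ 2 = ∑ a, (v a) ^ 2 := by
    rw [EuclideanSpace.norm_eq, Real.sq_sqrt (by positivity)]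
    simp [hx, sq_abs]
  rw [h1, ← h2]
  calc |inner ℝ x (Matrix.toEuclideanLin E x)|
      ≤ ‖x‖ * ‖Matrix.toEuclideanLin E x‖ := abs_real_inner_le_norm _ _
    _ ≤ ‖x‖ * (specNorm E * ‖x‖) := by
        apply mul_le_mul_of_nonneg_left _ (norm_nonneg x)
        exact (LinearMap.toContinuousLinearMap (Matrix.toEuclideanLin E)).le_opNorm x
    _ = specNorm E * ‖x‖ ^ 2 := by ring

lemma key_bound {d : ℕ} (E B : Matrix (Fin d) (Fin d) ℝ) (hE : Eᵀ = E) (hB : Bᵀ = B) :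
    |frobInner E B| ≤ specNorm E * (Real.sqrt ((B.rank : ℝ)) * frobNorm B) := by
  classical
  have hBh : B.IsHermitian := by
    rw [Matrix.IsHermitian]; ext i j
    simp only [Matrix.conjTranspose_apply, star_trivial]
    exact (congrFun (congrFun hB j) i).symm
  set U : Matrix (Fin d) (Fin d) ℝ := (hBh.eigenvectorUnitary : Matrix (Fin d) (Fin d) ℝ) with hU
  set lam : Fin d → ℝ := hBh.eigenvalues with hlam
  have hf : (RCLike.ofReal ∘ lam : Fin d → ℝ) = lam := rfl
  have hspec : B = U * Matrix.diagonal lam * star U := by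
    have := hBh.spectral_theorem
    rwa [hf] at this
  have hUU : star U * U = 1 := hBh.eigenvectorUnitary.prop.1
  -- frobInner B B = ∑ lam i ^ 2
  have hBB : frobInner B B = ∑ i, lam i ^ 2 := by
    rw [frobInner, hB]
    conv_lhs => rw [hspec]
    have : (U * Matrix.diagonal lam * star U) * (U * Matrix.diagonal lam * star U)
        = U * (Matrix.diagonal lam * Matrix.diagonal lam) * star U := by
      simp only [mul_assoc]
      rw [← mul_assoc (star U) U, hUU, one_mul]
    rw [this, Matrix.trace_mul_cycle, ← mul_assoc, hUU, one_mul,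
      Matrix.diagonal_mul_diagonal, Matrix.trace_diagonal]
    exact Finset.sum_congr rfl fun i _ => (sq (lam i)).symm
  -- trace formula
  set q : Fin d → ℝ := fun i => (star U * E * U) i i with hq
  have hEB : frobInner E B = ∑ i, lam i * q i := by
    rw [frobInner, hE]
    conv_lhs => rw [hspec]
    rw [show E * (U * Matrix.diagonal lam * star U) = (E * U) * Matrix.diagonal lam * star U by
      rw [← mul_assoc, ← mul_assoc]]
    rw [Matrix.trace_mul_cycle, ← mul_assoc, Matrix.trace]
    apply Finset.sum_congr rfl
    intro i _
    rw [Matrix.diag_apply, Matrix.mul_diagonal, mul_comm]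
  -- q bound
  have hqle : ∀ i, |q i| ≤ specNorm E := by
    intro i
    have hnorm1 : ∑ a, (U a i) ^ 2 = 1 := by
      have := congrFun (congrFun hUU i) i
      simp only [Matrix.mul_apply, Matrix.star_apply, star_trivial, Matrix.one_apply_eq] at this
      rw [← this]
      exact Finset.sum_congr rfl fun a _ => sq (U a i)
    have hqi : q i = ∑ a, ∑ c, (fun a => U a i) a * E a c * (fun a => U a i) c := by
      show (star U * E * U) i i = _
      simp only [Matrix.mul_apply, Matrix.star_apply, star_trivial, Finset.sum_mul]
      rw [Finset.sum_comm]
    rw [hqi]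
    calc |∑ a, ∑ c, (fun a => U a i) a * E a c * (fun a => U a i) c|
        ≤ specNorm E * ∑ a, ((fun a => U a i) a) ^ 2 := quad_form_le E _
      _ = specNorm E := by rw [hnorm1, mul_one]
  -- sum of |lam| bound
  have hrank : (B.rank : ℝ) = ((Finset.univ.filter (fun i => lam i ≠ 0)).card : ℝ) := by
    rw [hBh.rank_eq_card_non_zero_eigs]
    norm_cast
    exact Fintype.card_subtype _
  have hsumlam : ∑ i, |lam i| ≤ Real.sqrt ((B.rank : ℝ)) * frobNorm B := by
    set s := Finset.univ.filter (fun i => lam i ≠ 0) with hs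
    have h1 : ∑ i, |lam i| = ∑ i ∈ s, |lam i| := by
      rw [eq_comm]
      apply Finset.sum_subset (Finset.subset_univ s)
      intro i _ hi
      simp only [hs, Finset.mem_filter, Finset.mem_univ, true_and, not_not] at hi
      rw [hi, abs_zero]
    have h2 : (∑ i ∈ s, |lam i|) ^ 2 ≤ (s.card : ℝ) * ∑ i ∈ s, lam i ^ 2 := by
      have := sq_sum_le_card_mul_sum_sq (s := s) (f := fun i => |lam i|)
      simpa [sq_abs] using this
    have h3 : ∑ i ∈ s, lam i ^ 2 ≤ ∑ i, lam i ^ 2 :=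
      Finset.sum_le_sum_of_subset_of_nonneg (Finset.subset_univ s)
        (fun i _ _ => sq_nonneg _)
    have h4 : (∑ i ∈ s, |lam i|) ^ 2 ≤ (B.rank : ℝ) * frobNorm B ^ 2 := by
      rw [hrank, frobNorm_sq, hBB]
      exact le_trans h2 (mul_le_mul_of_nonneg_left h3 (Nat.cast_nonneg _))
    rw [h1]
    have h5 : ∑ i ∈ s, |lam i| = Real.sqrt ((∑ i ∈ s, |lam i|) ^ 2) := by
      rw [Real.sqrt_sq (Finset.sum_nonneg fun i _ => abs_nonneg _)]
    rw [h5]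
    calc Real.sqrt ((∑ i ∈ s, |lam i|) ^ 2) ≤ Real.sqrt ((B.rank : ℝ) * frobNorm B ^ 2) :=
          Real.sqrt_le_sqrt h4
      _ = Real.sqrt ((B.rank : ℝ)) * frobNorm B := by
          rw [Real.sqrt_mul (by positivity), Real.sqrt_sq (frobNorm_nonneg B)]
  -- combine
  calc |frobInner E B| = |∑ i, lam i * q i| := by rw [hEB]
    _ ≤ ∑ i, |lam i * q i| := Finset.abs_sum_le_sum_abs _ _
    _ ≤ ∑ i, |lam i| * specNorm E := by
        apply Finset.sum_le_sum
        intro i _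
        rw [abs_mul]
        exact mul_le_mul_of_nonneg_left (hqle i) (abs_nonneg _)
    _ = specNorm E * ∑ i, |lam i| := by rw [← Finset.sum_mul]; ring
    _ ≤ specNorm E * (Real.sqrt ((B.rank : ℝ)) * frobNorm B) :=
        mul_le_mul_of_nonneg_left hsumlam (specNorm_nonneg E)

lemma rank_ne_zero_of_ne_zero {d : ℕ} {A : Matrix (Fin d) (Fin d) ℝ} (h : A ≠ 0) :
    A.rank ≠ 0 := by
  intro h0
  apply h
  have hbot : LinearMap.range A.mulVecLin = ⊥ := by
    rw [Matrix.rank] at h0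
    rwa [Submodule.finrank_eq_zero] at h0
  have hzero : A.mulVecLin = 0 := LinearMap.range_eq_bot.mp hbot
  ext i j
  have h2 : A.mulVecLin (Pi.single j 1) = 0 := by rw [hzero]; rfl
  have h3 := congrFun h2 i
  simpa [Matrix.mulVecLin_apply, Matrix.mulVec_single] using h3

/-- on the event `(1/n)‖∑ᵢ εᵢ‖₂ ≤ λ/(M₁ u_p n)`, the squared
Frobenius error of the penalized estimator is at most `4λ|θ*|₁/n`. -/
theorem stmt_7 {d p n : ℕ} (hp : 0 < p) (hn : 0 < n) (M₁ : ℝ)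
    (B : Fin p → Matrix (Fin d) (Fin d) ℝ) (hBsymm : ∀ j, (B j)ᵀ = B j)
    (hBF : ∀ j, frobNorm (B j) ≤ M₁)
    (u : ℝ) (hu : u = Finset.univ.sup' (Finset.univ_nonempty_iff.mpr ⟨⟨0, hp⟩⟩)
      (fun j => Real.sqrt ((B j).rank : ℝ)))
    (θstar : Fin p → ℝ)
    (ε : Fin n → Matrix (Fin d) (Fin d) ℝ) (hεsymm : ∀ i, (ε i)ᵀ = ε i)
    (Z : Fin n → Matrix (Fin d) (Fin d) ℝ) (hZ : ∀ i, Z i = Gamma B θstar + ε i)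
    (lam : ℝ) (hlam : 0 < lam)
    (θhat : Fin p → ℝ) (hθhat : ∀ θ, objective B Z lam θhat ≤ objective B Z lam θ)
    (hevent : (1 / n : ℝ) * specNorm (∑ i, ε i) ≤ lam / (M₁ * u * n)) :
    frobNorm (Gamma B θhat - Gamma B θstar) ^ 2 ≤ 4 * lam * (∑ j, |θstar j|) / n := by
  classical
  have hn' : (0 : ℝ) < n := by exact_mod_cast hn
  have hRHSnn : 0 ≤ 4 * lam * (∑ j, |θstar j|) / n := by
    apply div_nonneg _ (le_of_lt hn')
    have : 0 ≤ ∑ j, |θstar j| := Finset.sum_nonneg fun j _ => abs_nonneg _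
    positivity
  by_cases hall : ∀ j, B j = 0
  · have hG : ∀ θ : Fin p → ℝ, Gamma B θ = 0 := fun θ => by simp [Gamma, hall]
    rw [hG, hG, sub_zero]
    have h0 : frobNorm (0 : Matrix (Fin d) (Fin d) ℝ) = 0 := by
      rw [frobNorm, frobInner_eq_sum]
      simp
    rw [h0]
    simpa using hRHSnn
  push_neg at hall
  obtain ⟨j₀, hj₀⟩ := hall
  have hM1 : 0 < M₁ := lt_of_lt_of_le (frobNorm_pos hj₀) (hBF j₀)
  have hupos : 0 < u := by
    have hrk : (B j₀).rank ≠ 0 := by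
      exact rank_ne_zero_of_ne_zero hj₀
    have h1 : (0 : ℝ) < Real.sqrt ((B j₀).rank : ℝ) := by
      apply Real.sqrt_pos.mpr
      exact_mod_cast Nat.pos_of_ne_zero hrk
    calc (0:ℝ) < Real.sqrt ((B j₀).rank : ℝ) := h1
      _ ≤ u := hu ▸ Finset.le_sup' (f := fun j => Real.sqrt (((B j).rank : ℝ))) (Finset.mem_univ j₀)
  set Emat : Matrix (Fin d) (Fin d) ℝ := ∑ i, ε i with hEmat
  have hEsym : Ematᵀ = Emat := by
    rw [hEmat, Matrix.transpose_sum]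
    exact Finset.sum_congr rfl fun i _ => hεsymm i
  -- spectral norm bound from the event
  have hspecle : specNorm Emat * (M₁ * u) ≤ lam := by
    have h1 : specNorm Emat ≤ lam / (M₁ * u) := by
      have h2 : specNorm Emat / n ≤ (lam / (M₁ * u)) / n := by
        rw [div_div]
        calc specNorm Emat / n = (1 / n : ℝ) * specNorm Emat := by ring
          _ ≤ lam / (M₁ * u * n) := hevent
      exact (div_le_div_iff_of_pos_right hn').mp h2
    exact (le_div_iff₀ (by positivity)).mp h1
  -- per-coordinate bound
  have hperj : ∀ j, |frobInner Emat (B j)| ≤ lam := by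
    intro j
    calc |frobInner Emat (B j)|
        ≤ specNorm Emat * (Real.sqrt (((B j).rank : ℝ)) * frobNorm (B j)) :=
          key_bound Emat (B j) hEsym (hBsymm j)
      _ ≤ specNorm Emat * (u * M₁) := by
          apply mul_le_mul_of_nonneg_left _ (specNorm_nonneg Emat)
          apply mul_le_mul (hu ▸ Finset.le_sup' (f := fun j => Real.sqrt (((B j).rank : ℝ))) (Finset.mem_univ j)) (hBF j)
            (frobNorm_nonneg _) (le_of_lt hupos)
      _ = specNorm Emat * (M₁ * u) := by ring
      _ ≤ lam := hspecle
  -- basic inequality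
  set Δ : Matrix (Fin d) (Fin d) ℝ := Gamma B θhat - Gamma B θstar with hΔ
  have hZhat : ∀ i, Z i - Gamma B θhat = ε i - Δ := by
    intro i; rw [hZ i, hΔ]; abel
  have hZstar : ∀ i, Z i - Gamma B θstar = ε i := by
    intro i; rw [hZ i]; abel
  have hrisk1 : empRisk B Z θhat
      = (∑ i, frobNorm (ε i) ^ 2) - 2 * frobInner Emat Δ + n * frobNorm Δ ^ 2 := by
    rw [empRisk]
    calc ∑ i, frobNorm (Z i - Gamma B θhat) ^ 2
        = ∑ i, (frobNorm (ε i) ^ 2 - 2 * frobInner (ε i) Δ + frobNorm Δ ^ 2) := by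
          refine Finset.sum_congr rfl fun i _ => ?_
          rw [hZhat i, frobNorm_sub_sq]
      _ = (∑ i, (frobNorm (ε i) ^ 2 - 2 * frobInner (ε i) Δ)) + ∑ i : Fin n, frobNorm Δ ^ 2 :=
          Finset.sum_add_distrib
      _ = (∑ i, frobNorm (ε i) ^ 2) - (∑ i, 2 * frobInner (ε i) Δ) + n * frobNorm Δ ^ 2 := by
          rw [Finset.sum_sub_distrib, Finset.sum_const, Finset.card_univ, Fintype.card_fin,
            nsmul_eq_mul]
      _ = (∑ i, frobNorm (ε i) ^ 2) - 2 * frobInner Emat Δ + n * frobNorm Δ ^ 2 := by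
          rw [hEmat, frobInner_sum_left, Finset.mul_sum]
  have hrisk2 : empRisk B Z θstar = ∑ i, frobNorm (ε i) ^ 2 := by
    rw [empRisk]
    exact Finset.sum_congr rfl fun i _ => by rw [hZstar i]
  have hobj := hθhat θstar
  rw [objective, objective, hrisk1, hrisk2] at hobj
  -- linearize frobInner Emat Δ
  have hΔexp : Δ = ∑ j, (θhat j - θstar j) • B j := by
    rw [hΔ, Gamma, Gamma, ← Finset.sum_sub_distrib]
    exact Finset.sum_congr rfl fun j _ => (sub_smul _ _ _).symm
  have hEΔ : frobInner Emat Δ ≤ lam * ((∑ j, |θhat j|) + ∑ j, |θstar j|) := by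
    rw [hΔexp, frobInner_sum_smul]
    calc ∑ j, (θhat j - θstar j) * frobInner Emat (B j)
        ≤ ∑ j, |θhat j - θstar j| * lam := by
          apply Finset.sum_le_sum
          intro j _
          calc (θhat j - θstar j) * frobInner Emat (B j)
              ≤ |(θhat j - θstar j) * frobInner Emat (B j)| := le_abs_self _
            _ = |θhat j - θstar j| * |frobInner Emat (B j)| := abs_mul _ _
            _ ≤ |θhat j - θstar j| * lam :=
                mul_le_mul_of_nonneg_left (hperj j) (abs_nonneg _)
      _ = lam * ∑ j, |θhat j - θstar j| := by rw [← Finset.sum_mul]; ring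
      _ ≤ lam * ((∑ j, |θhat j|) + ∑ j, |θstar j|) := by
          apply mul_le_mul_of_nonneg_left _ (le_of_lt hlam)
          rw [← Finset.sum_add_distrib]
          exact Finset.sum_le_sum fun j _ => abs_sub (θhat j) (θstar j)
  -- conclude
  have hmain : (n : ℝ) * frobNorm Δ ^ 2 ≤ 4 * lam * ∑ j, |θstar j| := by nlinarith
  rw [← hΔ] at *
  rw [div_eq_mul_inv]
  calc frobNorm Δ ^ 2 = ((n : ℝ) * frobNorm Δ ^ 2) * (n : ℝ)⁻¹ := by
        field_simp
      _ ≤ (4 * lam * ∑ j, |θstar j|) * (n : ℝ)⁻¹ := by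
        apply mul_le_mul_of_nonneg_right hmain (by positivity)
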